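/- Fix an integer d ≥ 5 and let Q : ℝ → ℝ be continuous with Q(t) − (3−d) = O(e^{2t}) as t → −∞. Suppose γ : ℝ → ℝ is a C² solution of γ''(t) + (d−4)γ'(t) + Q(t)γ(t) = 0 with γ(t) − e^t = O(e^{3t}) and γ'(t) − e^t = O(e^{3t}) as t → −∞. Then every C² solution Ξ : ℝ → ℝ of the same equation whose Wronskian with γ satisfies γ(t)Ξ'(t) − γ'(t)Ξ(t) = e^{(4−d)t} for all t ∈ ℝ obeys Ξ(t) − (2−d)^{-1}e^{(3−d)t} = O(e^{(5−d)t}) as t → −∞. -/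

import Mathlib

open Filter Asymptotics Topology Set

private lemma expDeriv12 (k t : ℝ) :
    HasDerivAt (fun s : ℝ => Real.exp (k * s)) (k * Real.exp (k * t)) t := by
  have h := (Real.hasDerivAt_exp (k * t)).comp t ((hasDerivAt_id t).const_mul k)
  exact h.congr_deriv (by simp only [id, mul_one]; ring)

set_option maxHeartbeats 1000000 in
/-- Behavior at `-∞` of the second solution `Ξ`, normalized by the Wronskian relation,
of a second-order linear equation whose first solution `γ` decays like `e^t`. -/
theorem stmt_12 (d : ℤ) (hd : 5 ≤ d) (Q : ℝ → ℝ) (hQc : Continuous Q)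
    (hQ : (fun t : ℝ => Q t - (3 - (d : ℝ))) =O[atBot] fun t : ℝ => Real.exp (2 * t))
    (γ : ℝ → ℝ) (hγC : ContDiff ℝ 2 γ)
    (hγeq : ∀ t : ℝ, deriv (deriv γ) t + ((d : ℝ) - 4) * deriv γ t + Q t * γ t = 0)
    (hγasym : (fun t : ℝ => γ t - Real.exp t) =O[atBot] fun t : ℝ => Real.exp (3 * t))
    (hγ'asym : (fun t : ℝ => deriv γ t - Real.exp t) =O[atBot] fun t : ℝ => Real.exp (3 * t))
    (Ξ : ℝ → ℝ) (hΞC : ContDiff ℝ 2 Ξ)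
    (hΞeq : ∀ t : ℝ, deriv (deriv Ξ) t + ((d : ℝ) - 4) * deriv Ξ t + Q t * Ξ t = 0)
    (hW : ∀ t : ℝ, γ t * deriv Ξ t - deriv γ t * Ξ t = Real.exp ((4 - (d : ℝ)) * t)) :
    (fun t : ℝ => Ξ t - (2 - (d : ℝ))⁻¹ * Real.exp ((3 - (d : ℝ)) * t))
      =O[atBot] fun t : ℝ => Real.exp ((5 - (d : ℝ)) * t) := by
  set a : ℝ := (d : ℝ) with hadef
  have ha5 : (5 : ℝ) ≤ a := by rw [hadef]; exact_mod_cast hd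
  have ha2 : (0:ℝ) < a - 2 := by linarith
  have ha4 : (0:ℝ) < a - 4 := by linarith
  have hγd : Differentiable ℝ γ := hγC.differentiable (by norm_num)
  have hΞd : Differentiable ℝ Ξ := hΞC.differentiable (by norm_num)
  obtain ⟨c0, hc0⟩ := hγasym.bound
  set c1 : ℝ := max c0 1 with hc1def
  have hc1pos : (0:ℝ) < c1 := lt_of_lt_of_le one_pos (le_max_right _ _)
  have hc' : ∀ᶠ t in atBot, |γ t - Real.exp t| ≤ c1 * Real.exp (3 * t) := by
    filter_upwards [hc0] with t ht
    have h1 : ‖γ t - Real.exp t‖ ≤ c0 * ‖Real.exp (3 * t)‖ := ht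
    rw [Real.norm_eq_abs, Real.norm_eq_abs, abs_of_pos (Real.exp_pos _)] at h1
    exact h1.trans (mul_le_mul_of_nonneg_right (le_max_left _ _) (Real.exp_pos _).le)
  obtain ⟨T0, hT0⟩ := eventually_atBot.1 hc'
  set T : ℝ := min (min T0 0) (Real.log (1 / (2 * c1)) / 2) with hTdef
  have hTT0 : T ≤ T0 := le_trans (min_le_left _ _) (min_le_left _ _)
  have hT0' : T ≤ 0 := le_trans (min_le_left _ _) (min_le_right _ _)
  have hTlog : T ≤ Real.log (1 / (2 * c1)) / 2 := min_le_right _ _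
  have hsmall : ∀ t ≤ T, c1 * Real.exp (2 * t) ≤ 1 / 2 := by
    intro t ht
    have h2 : 2 * t ≤ Real.log (1 / (2 * c1)) := by
      have := ht.trans hTlog; linarith
    have h1 : Real.exp (2 * t) ≤ 1 / (2 * c1) := by
      calc Real.exp (2*t) ≤ Real.exp (Real.log (1/(2*c1))) := Real.exp_le_exp.2 h2
      _ = 1/(2*c1) := Real.exp_log (by positivity)
    calc c1 * Real.exp (2*t) ≤ c1 * (1/(2*c1)) :=
          mul_le_mul_of_nonneg_left h1 hc1pos.le
    _ = 1/2 := by field_simp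
  have hγb : ∀ t ≤ T, |γ t - Real.exp t| ≤ c1 * Real.exp (3*t) :=
    fun t ht => hT0 t (ht.trans hTT0)
  have hγclose : ∀ t ≤ T, |γ t - Real.exp t| ≤ Real.exp t / 2 := by
    intro t ht
    have h1 := hγb t ht
    have h2 := hsmall t ht
    have h3 : Real.exp (3*t) = Real.exp (2*t) * Real.exp t := by
      rw [← Real.exp_add]; ring_nf
    rw [h3] at h1
    nlinarith [Real.exp_pos t, Real.exp_pos (2*t),
      mul_le_mul_of_nonneg_right h2 (Real.exp_pos t).le]
  have hγlo : ∀ t ≤ T, Real.exp t / 2 ≤ γ t := by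
    intro t ht
    have h1 := (abs_le.1 (hγclose t ht)).1
    linarith
  have hγhi : ∀ t ≤ T, γ t ≤ 3/2 * Real.exp t := by
    intro t ht
    have h1 := (abs_le.1 (hγclose t ht)).2
    linarith
  have hγpos : ∀ t ≤ T, 0 < γ t := fun t ht =>
    lt_of_lt_of_le (by positivity) (hγlo t ht)
  set h : ℝ → ℝ := fun t => Ξ t / γ t + Real.exp ((2 - a)*t) / (a - 2) with hhdef
  -- derivative of h
  have hderiv : ∀ t : ℝ, γ t ≠ 0 →
      HasDerivAt h (Real.exp ((4 - a)*t)/(γ t)^2 - Real.exp ((2 - a)*t)) t := by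
    intro t hne
    have h1 : HasDerivAt (fun s => Ξ s / γ s)
        ((deriv Ξ t * γ t - Ξ t * deriv γ t) / (γ t)^2) t :=
      ((hΞd t).hasDerivAt).div ((hγd t).hasDerivAt) hne
    have h2 : deriv Ξ t * γ t - Ξ t * deriv γ t = Real.exp ((4 - a)*t) := by
      linear_combination hW t
    rw [h2] at h1
    have h3 : HasDerivAt (fun s => Real.exp ((2 - a)*s) / (a - 2))
        (-(Real.exp ((2 - a)*t))) t := by
      have h4 := (expDeriv12 (2 - a) t).div_const (a - 2)
      refine h4.congr_deriv ?_
      rw [div_eq_iff ha2.ne']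
      ring
    have h6 : Real.exp ((4 - a)*t)/(γ t)^2 - Real.exp ((2 - a)*t)
        = Real.exp ((4 - a)*t)/(γ t)^2 + -(Real.exp ((2 - a)*t)) := by ring
    rw [h6]
    exact h1.add h3
  -- bound on h'
  have hder_bound : ∀ t ≤ T,
      |Real.exp ((4 - a)*t)/(γ t)^2 - Real.exp ((2 - a)*t)|
        ≤ 10 * c1 * Real.exp ((4 - a)*t) := by
    intro t ht
    have hγp := hγpos t ht
    have hlo := hγlo t ht
    have hhi := hγhi t ht
    have hcl := hγb t ht
    have hE4 : Real.exp ((4 - a)*t) = Real.exp ((2 - a)*t) * (Real.exp t)^2 := by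
      rw [sq, ← Real.exp_add, ← Real.exp_add]; ring_nf
    have hE3 : Real.exp (3*t) = (Real.exp t)^3 := by
      rw [show (3:ℝ)*t = t + t + t by ring, Real.exp_add, Real.exp_add]; ring
    have hid : Real.exp ((4 - a)*t)/(γ t)^2 - Real.exp ((2 - a)*t)
        = Real.exp ((2 - a)*t) * ((Real.exp t - γ t)*(Real.exp t + γ t)) / (γ t)^2 := by
      rw [hE4]; field_simp; ring
    rw [hid, abs_div, abs_mul, abs_of_pos (Real.exp_pos _), abs_mul,
      abs_of_pos (pow_pos hγp 2)]
    rw [div_le_iff₀ (pow_pos hγp 2)]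
    have hA : |Real.exp t - γ t| ≤ c1 * (Real.exp t)^3 := by
      rw [abs_sub_comm]; rw [hE3] at hcl; exact hcl
    have hB : |Real.exp t + γ t| ≤ 5/2 * Real.exp t := by
      rw [abs_of_pos (by positivity)]; linarith
    have hAB : |Real.exp t - γ t| * |Real.exp t + γ t|
        ≤ (c1 * (Real.exp t)^3) * (5/2 * Real.exp t) :=
      mul_le_mul hA hB (abs_nonneg _) (by positivity)
    have hγsq : (Real.exp t)^2/4 ≤ (γ t)^2 := by nlinarith [Real.exp_pos t]
    rw [hE4]
    nlinarith [mul_le_mul_of_nonneg_left hAB (Real.exp_pos ((2-a)*t)).le,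
      mul_le_mul_of_nonneg_left hγsq
        (by positivity : (0:ℝ) ≤ 10 * c1 * (Real.exp ((2-a)*t) * (Real.exp t)^2)),
      Real.exp_pos ((2-a)*t), Real.exp_pos t]
  set K : ℝ := 10 * c1 / (a - 4) with hKdef
  have hKpos : 0 < K := by positivity
  have hK4 : K * (4 - a) = -(10 * c1) := by
    rw [hKdef]; field_simp; ring
  -- main Gronwall-type bound
  have hhb : ∀ t ≤ T, |h t - h T| ≤ K * Real.exp ((4 - a)*t) := by
    intro t ht
    have hconth : ContinuousOn h (Icc t T) := fun s hs =>
      ((hderiv s (hγpos s hs.2).ne').differentiableAt.continuousAt).continuousWithinAt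
    have hcontE : Continuous fun s : ℝ => K * Real.exp ((4 - a)*s) :=
      continuous_const.mul (Real.continuous_exp.comp (continuous_const.mul continuous_id))
    have hφmono : AntitoneOn (fun s => h s + K * Real.exp ((4 - a)*s)) (Icc t T) := by
      apply antitoneOn_of_deriv_nonpos (convex_Icc t T)
      · exact hconth.add hcontE.continuousOn
      · intro s hs
        rw [interior_Icc] at hs
        exact (((hderiv s (hγpos s hs.2.le).ne').add
          ((expDeriv12 (4-a) s).const_mul K)).differentiableAt).differentiableWithinAt
      · intro s hs
        rw [interior_Icc] at hs
        have hd1 := (hderiv s (hγpos s hs.2.le).ne').add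
          ((expDeriv12 (4-a) s).const_mul K)
        rw [show (fun s => h s + K * Real.exp ((4 - a) * s)) = (h + fun y => K * Real.exp ((4 - a) * y)) from rfl, hd1.deriv]
        have hb := (abs_le.1 (hder_bound s hs.2.le)).2
        have hK4' : K * ((4 - a) * Real.exp ((4-a)*s))
            = -(10 * c1 * Real.exp ((4-a)*s)) := by
          rw [← mul_assoc, hK4]; ring
        linarith
    have hψmono : MonotoneOn (fun s => h s - K * Real.exp ((4 - a)*s)) (Icc t T) := by
      apply monotoneOn_of_deriv_nonneg (convex_Icc t T)
      · exact hconth.sub hcontE.continuousOn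
      · intro s hs
        rw [interior_Icc] at hs
        exact (((hderiv s (hγpos s hs.2.le).ne').sub
          ((expDeriv12 (4-a) s).const_mul K)).differentiableAt).differentiableWithinAt
      · intro s hs
        rw [interior_Icc] at hs
        have hd1 := (hderiv s (hγpos s hs.2.le).ne').sub
          ((expDeriv12 (4-a) s).const_mul K)
        rw [show (fun s => h s - K * Real.exp ((4 - a) * s)) = (h - fun y => K * Real.exp ((4 - a) * y)) from rfl, hd1.deriv]
        have hb := (abs_le.1 (hder_bound s hs.2.le)).1
        have hK4' : K * ((4 - a) * Real.exp ((4-a)*s))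
            = -(10 * c1 * Real.exp ((4-a)*s)) := by
          rw [← mul_assoc, hK4]; ring
        linarith
    have htm : t ∈ Icc t T := ⟨le_refl t, ht⟩
    have hTm : T ∈ Icc t T := ⟨ht, le_refl T⟩
    have hφ := hφmono htm hTm ht
    have hψ := hψmono htm hTm ht
    have hKT : 0 ≤ K * Real.exp ((4-a)*T) := by positivity
    rw [abs_le]
    constructor <;> [skip; skip]
    · simp only at hφ; linarith
    · simp only at hψ; linarith
  -- final assembly
  rw [isBigO_iff]
  refine ⟨3/2*K + 3/2*|h T| + c1/(a-2), ?_⟩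
  rw [eventually_atBot]
  refine ⟨T, fun t ht => ?_⟩
  have hγp := hγpos t ht
  have hhi := hγhi t ht
  have hcl := hγb t ht
  have hhbt := hhb t ht
  have ht0 : t ≤ 0 := ht.trans hT0'
  have he35 : Real.exp ((3-a)*t) = Real.exp t * Real.exp ((2-a)*t) := by
    rw [← Real.exp_add]; ring_nf
  have he5 : Real.exp ((5-a)*t) = Real.exp t * Real.exp ((4-a)*t) := by
    rw [← Real.exp_add]; ring_nf
  have he5' : Real.exp ((5-a)*t) = Real.exp (3*t) * Real.exp ((2-a)*t) := by
    rw [← Real.exp_add]; ring_nf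
  have het5 : Real.exp t ≤ Real.exp ((5-a)*t) := by
    apply Real.exp_le_exp.2
    nlinarith
  have hXi : Ξ t = γ t * (h t - Real.exp ((2-a)*t)/(a-2)) := by
    rw [hhdef]
    field_simp
    ring
  have h2a : (2:ℝ) - a ≠ 0 := by linarith
  have hdecomp : Ξ t - (2-a)⁻¹ * Real.exp ((3-a)*t)
      = γ t * (h t - h T) + h T * γ t
        - (γ t - Real.exp t) * Real.exp ((2-a)*t) / (a-2) := by
    have hinv : (2-a)⁻¹ = -(a-2)⁻¹ := by
      rw [show (2:ℝ)-a = -(a-2) by ring, inv_neg]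
    rw [hXi, he35, hinv, div_eq_mul_inv, div_eq_mul_inv]
    ring
  have h1 : |γ t * (h t - h T)| ≤ 3/2*K * Real.exp ((5-a)*t) := by
    rw [abs_mul, abs_of_pos hγp, he5]
    calc γ t * |h t - h T| ≤ (3/2 * Real.exp t) * (K * Real.exp ((4-a)*t)) :=
          mul_le_mul hhi hhbt (abs_nonneg _) (by positivity)
    _ = 3/2*K * (Real.exp t * Real.exp ((4-a)*t)) := by ring
  have h2 : |h T * γ t| ≤ 3/2*|h T| * Real.exp ((5-a)*t) := by
    rw [abs_mul, abs_of_pos hγp]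
    calc |h T| * γ t ≤ |h T| * (3/2 * Real.exp t) :=
          mul_le_mul_of_nonneg_left hhi (abs_nonneg _)
    _ ≤ |h T| * (3/2 * Real.exp ((5-a)*t)) := by
          apply mul_le_mul_of_nonneg_left _ (abs_nonneg _)
          linarith
    _ = 3/2*|h T| * Real.exp ((5-a)*t) := by ring
  have h3 : |(γ t - Real.exp t) * Real.exp ((2-a)*t) / (a-2)|
      ≤ c1/(a-2) * Real.exp ((5-a)*t) := by
    rw [abs_div, abs_mul, abs_of_pos (Real.exp_pos _), abs_of_pos ha2,
      div_le_iff₀ ha2, he5']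
    calc |γ t - Real.exp t| * Real.exp ((2-a)*t)
        ≤ (c1 * Real.exp (3*t)) * Real.exp ((2-a)*t) :=
          mul_le_mul_of_nonneg_right hcl (Real.exp_pos _).le
    _ = c1/(a-2) * (Real.exp (3*t) * Real.exp ((2-a)*t)) * (a-2) := by
          field_simp
  rw [Real.norm_eq_abs, Real.norm_eq_abs, abs_of_pos (Real.exp_pos _), hdecomp]
  have habs : |γ t * (h t - h T) + h T * γ t
      - (γ t - Real.exp t) * Real.exp ((2-a)*t) / (a-2)|
      ≤ |γ t * (h t - h T)| + |h T * γ t|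
        + |(γ t - Real.exp t) * Real.exp ((2-a)*t) / (a-2)| := by
    rw [sub_eq_add_neg]
    refine (abs_add_le _ _).trans ?_
    rw [abs_neg]
    linarith [abs_add_le (γ t * (h t - h T)) (h T * γ t)]
  linarith
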